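/- Fix α > 0 and let 𝔤 = 𝔤^α_{4.9} be the 4-dimensional real Lie algebra with basis e₁,...,e₄ and nonzero brackets [e₁,e₄] = 2αe₁, [e₂,e₄] = αe₂ − e₃, [e₃,e₄] = e₂ + αe₃, [e₂,e₃] = e₁. A 4×4 real matrix R equals η·Id + D for some η ∈ ℝ and some derivation D of 𝔤 if and only if R₂₁ = R₃₁ = R₄₁ = 0, R₄₂ = R₄₃ = 0, R₃₂ = −R₂₃, R₂₂ = R₃₃, R₃₄ = −αR₁₂ − R₁₃, R₂₄ = −R₁₂ + αR₁₃, and R₄₄ = R₂₂ + R₃₃ − R₁₁. In this case η = R₄₄. -/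

import Mathlib

open Matrix

/-- The Lie bracket of the Lie algebra, in coordinates. -/
def br (α : ℝ) (x y : Fin 4 → ℝ) : Fin 4 → ℝ :=
  ![2 * α * (x 0 * y 3 - x 3 * y 0) + (x 1 * y 2 - x 2 * y 1), α * (x 1 * y 3 - x 3 * y 1) + (x 2 * y 3 - x 3 * y 2), -(x 1 * y 3 - x 3 * y 1) + α * (x 2 * y 3 - x 3 * y 2), (0:ℝ)]

/-- `D` (acting via `mulVec`) is a derivation of the bracket. -/
def IsDer (α : ℝ) (D : Matrix (Fin 4) (Fin 4) ℝ) : Prop :=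
  ∀ x y : Fin 4 → ℝ, D.mulVec (br α x y) = br α (D.mulVec x) y + br α x (D.mulVec y)

lemma isDer_explicit (α a b c p q : ℝ) :
    IsDer α ![![2*q, a, b, c], ![0, q, p, -a+α*b], ![0, -p, q, -α*a-b], ![0,0,0,0]] := by
  intro x y
  funext i
  fin_cases i <;>
    simp [br, mulVec, dotProduct, Fin.sum_univ_four] <;> ring

lemma der_entries (α : ℝ) (hα : 0 < α) (D : Matrix (Fin 4) (Fin 4) ℝ) (hD : IsDer α D) :
    D 1 0 = 0 ∧ D 2 0 = 0 ∧ D 3 0 = 0 ∧ D 3 1 = 0 ∧ D 3 2 = 0 ∧ D 3 3 = 0 ∧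
    D 2 1 = -D 1 2 ∧ D 1 1 = D 2 2 ∧ D 2 3 = -(α * D 0 1) - D 0 2 ∧
    D 1 3 = -D 0 1 + α * D 0 2 ∧ D 0 0 = D 1 1 + D 2 2 := by
  have h1 := hD ![1,0,0,0] ![0,0,0,1]
  have h2 := hD ![0,1,0,0] ![0,0,0,1]
  have h3 := hD ![0,0,1,0] ![0,0,0,1]
  have h4 := hD ![0,1,0,0] ![0,0,1,0]
  have a0 := congrFun h1 0; have a1 := congrFun h1 1
  have a2 := congrFun h1 2; have a3 := congrFun h1 3
  have b0 := congrFun h2 0; have b1 := congrFun h2 1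
  have b2 := congrFun h2 2; have b3 := congrFun h2 3
  have c0 := congrFun h3 0; have c3 := congrFun h3 3
  have d0 := congrFun h4 0
  simp [br, mulVec, dotProduct, Fin.sum_univ_four] at a0 a1 a2 a3 b0 b1 b2 b3 c0 c3 d0
  have hα2 : (0:ℝ) < α ^ 2 + 1 := by positivity
  -- D 3 3 = 0
  have h33 : D 3 3 = 0 := by
    have h : 2 * α * D 3 3 = 0 := by linear_combination -a0
    rcases mul_eq_zero.mp h with h | h
    · exact absurd h (by positivity)
    · exact h
  -- D 3 0 = 0
  have h30 : D 3 0 = 0 := by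
    rcases a3 with h | h
    · exact h
    · exact absurd h hα.ne'
  -- D 1 0 = 0
  have h10 : D 1 0 = 0 := by
    have h : (α ^ 2 + 1) * D 1 0 = 0 := by linear_combination α * a1 + a2
    rcases mul_eq_zero.mp h with h | h
    · exact absurd h (by positivity)
    · exact h
  have h20 : D 2 0 = 0 := by linear_combination -a1 + α * h10
  -- D 3 1 = 0
  have h31 : D 3 1 = 0 := by
    have h : (α ^ 2 + 1) * D 3 1 = 0 := by linear_combination α * b3 + c3
    rcases mul_eq_zero.mp h with h | h
    · exact absurd h (by positivity)
    · exact h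
  have h32 : D 3 2 = 0 := by linear_combination -b3 + α * h31
  refine ⟨h10, h20, h30, h31, h32, h33, ?_, ?_, ?_, ?_, ?_⟩
  · linear_combination -b1 - α * h33
  · linear_combination b2 - h33
  · linear_combination -b0
  · linear_combination c0
  · linear_combination d0

theorem stmt_19 (α : ℝ) (hα : 0 < α) (R : Matrix (Fin 4) (Fin 4) ℝ) :
    ((∃ (η : ℝ) (D : Matrix (Fin 4) (Fin 4) ℝ), IsDer α D ∧
        R = η • (1 : Matrix (Fin 4) (Fin 4) ℝ) + D) ↔
      (R 1 0 = 0 ∧ R 2 0 = 0 ∧ R 3 0 = 0 ∧ R 3 1 = 0 ∧ R 3 2 = 0 ∧ R 2 1 = -R 1 2 ∧ R 1 1 = R 2 2 ∧ R 2 3 = -(α * R 0 1) - R 0 2 ∧ R 1 3 = -R 0 1 + α * R 0 2 ∧ R 3 3 = R 1 1 + R 2 2 - R 0 0)) ∧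
    (∀ (η : ℝ) (D : Matrix (Fin 4) (Fin 4) ℝ), IsDer α D →
      R = η • (1 : Matrix (Fin 4) (Fin 4) ℝ) + D → η = R 3 3) := by
  constructor
  · constructor
    · rintro ⟨η, D, hD, rfl⟩
      obtain ⟨h10, h20, h30, h31, h32, h33, h21, h11, h23, h13, h00⟩ := der_entries α hα D hD
      refine ⟨?_, ?_, ?_, ?_, ?_, ?_, ?_, ?_, ?_, ?_⟩ <;>
        simp [Matrix.add_apply, Matrix.smul_apply, Matrix.one_apply] <;> linarith
    · rintro ⟨h10, h20, h30, h31, h32, h21, h11, h23, h13, h33⟩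
      refine ⟨R 3 3, ![![2*(R 1 1 - R 3 3), R 0 1, R 0 2, R 0 3],
        ![0, R 1 1 - R 3 3, R 1 2, -(R 0 1)+α*(R 0 2)],
        ![0, -(R 1 2), R 1 1 - R 3 3, -α*(R 0 1)-(R 0 2)],
        ![0,0,0,0]], isDer_explicit α _ _ _ _ _, ?_⟩
      ext i j
      erw [Matrix.add_apply]
      fin_cases i <;> fin_cases j <;>
        simp [Matrix.add_apply, Matrix.smul_apply, Matrix.one_apply,
          Matrix.vecHead, Matrix.vecTail, Function.comp] <;> linarith
  · intro η D hD hR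
    obtain ⟨-, -, -, -, -, h33, -⟩ := der_entries α hα D hD
    have : R 3 3 = η * 1 + D 3 3 := by rw [hR]; simp [Matrix.one_apply]
    rw [this, h33]; ring
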